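/- arXiv:math/0703174 — 5 statements merged into one kernel-verified Lean document; each statement's English description precedes it below -/
import Mathlib

section
/- Let A and B be complex p×q matrices (p, q ≥ 1) such that tr(BᴴA) = 0 and such that for every pair of complex numbers (λ, μ) there exists a complex scalar c(λ,μ) with (λA + μB)ᴴ(λA + μB) = c(λ,μ) · I_q. Then AᴴB = 0; in particular every column vector of A is orthogonal to every column vector of B for the standard Hermitian scalar product on ℂᵖ. -/
open Matrix

/-- Polarization step in the proof of Lemma 3.2 of the paper: if `tr(BᴴA) = 0` and every
complex linear combination `λA + μB` satisfies `(λA + μB)ᴴ(λA + μB) = c(λ,μ) · I_q`,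
then `AᴴB = 0`. -/
theorem conjTranspose_mul_eq_zero_of_polarization (p q : ℕ) (hp : 1 ≤ p) (hq : 1 ≤ q)
    (A B : Matrix (Fin p) (Fin q) ℂ)
    (horth : Matrix.trace (Bᴴ * A) = 0)
    (hcomb : ∀ l m : ℂ, ∃ c : ℂ,
      (l • A + m • B)ᴴ * (l • A + m • B) = c • (1 : Matrix (Fin q) (Fin q) ℂ)) :
    Aᴴ * B = 0 := by
  have hexp : ∀ l m : ℂ, (l • A + m • B)ᴴ * (l • A + m • B)
      = (star l * l) • (Aᴴ * A) + (star l * m) • (Aᴴ * B)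
        + (star m * l) • (Bᴴ * A) + (star m * m) • (Bᴴ * B) := by
    intro l m
    simp only [conjTranspose_add, conjTranspose_smul, Matrix.add_mul, Matrix.mul_add,
      Matrix.smul_mul, Matrix.mul_smul, smul_add, smul_smul, Complex.star_def]
    module
  obtain ⟨c1, h1⟩ := hcomb 1 0
  obtain ⟨c2, h2⟩ := hcomb 0 1
  obtain ⟨c3, h3⟩ := hcomb 1 1
  obtain ⟨c4, h4⟩ := hcomb 1 Complex.I
  rw [hexp] at h1 h2 h3 h4
  simp only [star_one, one_mul, mul_one, star_zero, zero_mul, mul_zero, zero_smul,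
    add_zero, zero_add, one_smul, Complex.conj_I, Complex.star_def,
    neg_mul, Complex.I_mul_I, neg_neg, neg_smul] at h1 h2 h3 h4
  -- h1 : Aᴴ*A = c1•1, h2 : Bᴴ*B = c2•1
  -- h3 : Aᴴ*A + Aᴴ*B + Bᴴ*A + Bᴴ*B = c3•1
  -- h4 : Aᴴ*A + I•(Aᴴ*B) - I•(Bᴴ*A) + Bᴴ*B = c4•1
  have hS : Aᴴ * B + Bᴴ * A = (c3 - c1 - c2) • (1 : Matrix (Fin q) (Fin q) ℂ) := by
    rw [sub_smul, sub_smul, ← h1, ← h2, ← h3]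
    abel
  have hD : Complex.I • (Aᴴ * B) - Complex.I • (Bᴴ * A)
      = (c4 - c1 - c2) • (1 : Matrix (Fin q) (Fin q) ℂ) := by
    rw [sub_smul, sub_smul, ← h1, ← h2, ← h4]
    abel
  have hD' : Aᴴ * B - Bᴴ * A
      = (-Complex.I * (c4 - c1 - c2)) • (1 : Matrix (Fin q) (Fin q) ℂ) := by
    have := congrArg (fun M => (-Complex.I) • M) hD
    simpa [smul_smul, smul_sub, neg_mul, Complex.I_mul_I] using this
  set f : ℂ := (c3 - c1 - c2 + -Complex.I * (c4 - c1 - c2)) / 2 with hf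
  have hAB : Aᴴ * B = f • (1 : Matrix (Fin q) (Fin q) ℂ) := by
    have h2AB : (2 : ℂ) • (Aᴴ * B)
        = (c3 - c1 - c2 + -Complex.I * (c4 - c1 - c2)) • (1 : Matrix (Fin q) (Fin q) ℂ) := by
      rw [add_smul, ← hS, ← hD', two_smul]
      abel
    have := congrArg (fun M => ((2 : ℂ)⁻¹) • M) h2AB
    simp only [smul_smul] at this
    rw [inv_mul_cancel₀ (by norm_num : (2:ℂ) ≠ 0), one_smul] at this
    rw [this, hf]
    rw [div_eq_inv_mul]
  have htr : Matrix.trace (Aᴴ * B) = 0 := by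
    have h : Aᴴ * B = (Bᴴ * A)ᴴ := by simp [conjTranspose_mul]
    rw [h, trace_conjTranspose, horth, star_zero]
  rw [hAB] at htr ⊢
  rw [trace_smul, trace_one] at htr
  simp only [Fintype.card_fin, smul_eq_mul] at htr
  have hq0 : (q : ℂ) ≠ 0 := Nat.cast_ne_zero.mpr (by omega)
  rcases mul_eq_zero.mp htr with hf0 | hq' 
  · rw [hf0, zero_smul]
  · exact absurd hq' hq0
end

section
/- Let T, V, V' be finite-dimensional complex vector spaces. Let β : T → V' be a nonzero linear map and let γ : V → T* be a linear map (T* the complex dual of T). Assume the commutation relation: for all u ∈ V and all X, Y ∈ T, (γ(u)(Y))·β(X) = (γ(u)(X))·β(Y) in V'. Then the rank of γ is at most 1, i.e., dim_ℂ(im γ) ≤ 1. -/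
/-- Pointwise linear algebra of the Lemma of Section 3.3.2 of the paper: if
`β : T → V'` is a nonzero linear map and `γ : V → T*` satisfies the commutation
relation `(γ u)(Y) • β X = (γ u)(X) • β Y` for all `u, X, Y`, then `rank γ ≤ 1`. -/
theorem rank_le_one_of_commutation
    (T V V' : Type*) [AddCommGroup T] [Module ℂ T] [FiniteDimensional ℂ T]
    [AddCommGroup V] [Module ℂ V] [FiniteDimensional ℂ V]
    [AddCommGroup V'] [Module ℂ V'] [FiniteDimensional ℂ V']
    (β : T →ₗ[ℂ] V') (hβ : β ≠ 0)
    (γ : V →ₗ[ℂ] Module.Dual ℂ T)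
    (hcomm : ∀ (u : V) (X Y : T), (γ u Y) • β X = (γ u X) • β Y) :
    Module.finrank ℂ (LinearMap.range γ) ≤ 1 := by
  -- pick X₀ with β X₀ ≠ 0
  obtain ⟨X₀, hX₀⟩ : ∃ X₀, β X₀ ≠ 0 := by
    by_contra h
    push_neg at h
    exact hβ (LinearMap.ext fun x => h x)
  -- pick ℓ with ℓ (β X₀) = 1
  obtain ⟨ℓ₀, hℓ₀⟩ : ∃ ℓ : Module.Dual ℂ V', ℓ (β X₀) ≠ 0 := by
    by_contra h
    push_neg at h
    exact hX₀ ((Module.forall_dual_apply_eq_zero_iff ℂ (β X₀)).mp h)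
  set ℓ : Module.Dual ℂ V' := (ℓ₀ (β X₀))⁻¹ • ℓ₀ with hℓ
  have hℓβ : ℓ (β X₀) = 1 := by
    simp [hℓ, inv_mul_cancel₀ hℓ₀]
  set w : Module.Dual ℂ T := ℓ.comp β with hw
  have key : ∀ u, γ u = (γ u X₀) • w := by
    intro u
    ext Y
    have h := congrArg ℓ (hcomm u X₀ Y)
    simp only [map_smul, smul_eq_mul, hℓβ, mul_one] at h
    simpa [hw, mul_comm] using h
  have hrange : LinearMap.range γ ≤ Submodule.span ℂ {w} := by
    rintro _ ⟨u, rfl⟩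
    rw [key u]
    exact Submodule.smul_mem _ _ (Submodule.mem_span_singleton_self w)
  calc Module.finrank ℂ (LinearMap.range γ) ≤ Module.finrank ℂ (Submodule.span ℂ {w}) :=
        Submodule.finrank_mono hrange
    _ ≤ 1 := by simpa using finrank_span_le_card ({w} : Set (Module.Dual ℂ T))
end

section
/- Let T, V, W be finite-dimensional complex vector spaces with dim_ℂ T ≥ 2. Let β : W ⊗_ℂ T → V be an injective linear map and let γ : V → Hom_ℂ(T, W) be a linear map. Assume the commutation relation: for all v ∈ V and all X, Y ∈ T, β((γ(v)(Y)) ⊗ X) = β((γ(v)(X)) ⊗ Y). Then γ = 0. -/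
open TensorProduct

/-- Pointwise linear algebra of the Lemma of Section 3.4 of the paper: if
`dim_ℂ T ≥ 2`, `β : W ⊗ T → V` is injective and `γ : V → Hom(T, W)` satisfies the
commutation relation `β((γ v Y) ⊗ X) = β((γ v X) ⊗ Y)`, then `γ = 0`. -/
theorem gamma_eq_zero_of_beta_injective
    (T V W : Type*) [AddCommGroup T] [Module ℂ T] [FiniteDimensional ℂ T]
    [AddCommGroup V] [Module ℂ V] [FiniteDimensional ℂ V]
    [AddCommGroup W] [Module ℂ W] [FiniteDimensional ℂ W]
    (hT : 2 ≤ Module.finrank ℂ T)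
    (β : W ⊗[ℂ] T →ₗ[ℂ] V) (hβ : Function.Injective β)
    (γ : V →ₗ[ℂ] (T →ₗ[ℂ] W))
    (hcomm : ∀ (v : V) (X Y : T), β ((γ v Y) ⊗ₜ[ℂ] X) = β ((γ v X) ⊗ₜ[ℂ] Y)) :
    γ = 0 := by
  have b : Module.Basis (Fin (Module.finrank ℂ T)) ℂ T := Module.finBasis ℂ T
  apply LinearMap.ext; intro v
  simp only [LinearMap.zero_apply]
  refine b.ext fun i => ?_
  -- pick an index j ≠ i
  have h0 : (0 : ℕ) < Module.finrank ℂ T := by omega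
  have h1 : (1 : ℕ) < Module.finrank ℂ T := by omega
  set j : Fin (Module.finrank ℂ T) :=
    if i = ⟨0, h0⟩ then ⟨1, h1⟩ else ⟨0, h0⟩ with hj
  have hij : j ≠ i := by
    rcases eq_or_ne i ⟨0, h0⟩ with h | h
    · simp [hj, h, Fin.ext_iff]
    · simp only [hj, if_neg h]
      exact fun hcontra => h hcontra.symm
  have key : (γ v (b j)) ⊗ₜ[ℂ] (b i) = (γ v (b i)) ⊗ₜ[ℂ] (b j) :=
    hβ (hcomm v (b i) (b j))
  -- apply id ⊗ coord j, then rid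
  have := congrArg
    ((TensorProduct.rid ℂ W).toLinearMap ∘ₗ LinearMap.lTensor W (b.coord j)) key
  simp only [LinearMap.comp_apply, LinearMap.lTensor_tmul, Module.Basis.coord_apply,
    Module.Basis.repr_self_apply, LinearEquiv.coe_coe, TensorProduct.rid_tmul] at this
  rw [if_neg (fun h => hij h.symm), if_pos trivial] at this
  simpa using this.symm
end

section
/- Let T, V, W be finite-dimensional complex vector spaces with dim_ℂ T ≥ 2. Let γ : V → Hom_ℂ(T, W) be a surjective linear map and let β : W ⊗_ℂ T → V be a linear map. Assume the commutation relation: for all v ∈ V and all X, Y ∈ T, β((γ(v)(Y)) ⊗ X) = β((γ(v)(X)) ⊗ Y). Then β = 0. -/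
open TensorProduct

/-- Pointwise linear algebra of the second Lemma of Section 3.4 of the paper: if
`dim_ℂ T ≥ 2`, `γ : V → Hom(T, W)` is surjective and `β : W ⊗ T → V` satisfies the
commutation relation `β((γ v Y) ⊗ X) = β((γ v X) ⊗ Y)`, then `β = 0`. -/
theorem beta_eq_zero_of_gamma_surjective
    (T V W : Type*) [AddCommGroup T] [Module ℂ T] [FiniteDimensional ℂ T]
    [AddCommGroup V] [Module ℂ V] [FiniteDimensional ℂ V]
    [AddCommGroup W] [Module ℂ W] [FiniteDimensional ℂ W]
    (hT : 2 ≤ Module.finrank ℂ T)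
    (γ : V →ₗ[ℂ] (T →ₗ[ℂ] W)) (hγ : Function.Surjective γ)
    (β : W ⊗[ℂ] T →ₗ[ℂ] V)
    (hcomm : ∀ (v : V) (X Y : T), β ((γ v Y) ⊗ₜ[ℂ] X) = β ((γ v X) ⊗ₜ[ℂ] Y)) :
    β = 0 := by
  have key : ∀ (f : T →ₗ[ℂ] W) (X Y : T), β ((f Y) ⊗ₜ[ℂ] X) = β ((f X) ⊗ₜ[ℂ] Y) := by
    intro f X Y
    obtain ⟨v, rfl⟩ := hγ f
    exact hcomm v X Y
  apply TensorProduct.ext'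
  intro w t
  simp only [LinearMap.zero_apply]
  by_cases ht : t = 0
  · simp [ht]
  -- span of t is not the whole space
  have hspan : Submodule.span ℂ {t} ≠ ⊤ := by
    intro h
    have h1 : Module.finrank ℂ (Submodule.span ℂ {t}) = 1 := finrank_span_singleton ht
    rw [h, finrank_top] at h1
    omega
  obtain ⟨s, hs⟩ : ∃ s, s ∉ Submodule.span ℂ {t} := by
    by_contra h
    push_neg at h
    exact hspan (Submodule.eq_top_iff'.mpr h)
  -- the class of s in the quotient is nonzero
  set P := Submodule.span ℂ {t}
  have hq : P.mkQ s ≠ 0 := by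
    simpa [Submodule.mkQ_apply, Submodule.Quotient.mk_eq_zero] using hs
  obtain ⟨ψ, hψ⟩ : ∃ ψ : Module.Dual ℂ (T ⧸ P), ψ (P.mkQ s) ≠ 0 := by
    by_contra h
    push_neg at h
    exact hq ((Module.forall_dual_apply_eq_zero_iff ℂ (P.mkQ s)).mp h)
  set φ : T →ₗ[ℂ] ℂ := ((ψ (P.mkQ s))⁻¹ • ψ).comp P.mkQ with hφ
  have hφt : φ t = 0 := by
    have : P.mkQ t = 0 := by
      simp [Submodule.mkQ_apply, Submodule.Quotient.mk_eq_zero, P,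
        Submodule.mem_span_singleton_self]
    simp [hφ, this]
  have hφs : φ s = 1 := by
    simp only [hφ, LinearMap.comp_apply, LinearMap.smul_apply, smul_eq_mul]
    exact inv_mul_cancel₀ (by simpa using hψ)
  set f : T →ₗ[ℂ] W := φ.smulRight w with hf
  have := key f s t
  simp only [hf, LinearMap.smulRight_apply, hφt, hφs, one_smul, zero_smul,
    TensorProduct.zero_tmul, map_zero] at this
  exact this.symm
end

section
/- Let p ≥ 1 and n ≥ 1, let T be a finite-dimensional complex vector space, and let β, γ : T → ℂᵖ be linear maps (values regarded as p×1 column matrices). For X ∈ T let θ(X) be the (p+2)×(p+2) complex matrix with block form θ(X) = [[0, β(X), γ(X)], [γ(X)ᵀ, 0, 0], [β(X)ᵀ, 0, 0]] (blocks of sizes p, 1, 1). Assume that θ(X)θ(Y) = θ(Y)θ(X) for all X, Y ∈ T, and that θ(X₁)θ(X₂)⋯θ(X_n) = 0 for all X₁, …, X_n ∈ T. Then γ(X)ᵀβ(Y) = 0 for all X, Y ∈ T, and moreover either β(X)ᵀβ(Y) = 0 for all X, Y ∈ T or γ(X)ᵀγ(Y) = 0 for all X, Y ∈ T. -/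
open Matrix

private lemma obo_eq_zero {U : Matrix (Fin 1) (Fin 1) ℂ} (h : U 0 0 = 0) : U = 0 := by
  ext i j
  fin_cases i; fin_cases j; exact h

private lemma obo_pow (U : Matrix (Fin 1) (Fin 1) ℂ) (k : ℕ) : (U ^ k) 0 0 = (U 0 0) ^ k := by
  induction k with
  | zero => simp [Matrix.one_apply]
  | succ k ih => rw [pow_succ, pow_succ, Matrix.mul_apply, Fin.sum_univ_one, ih]

private lemma obo_transpose (U : Matrix (Fin 1) (Fin 1) ℂ) : Uᵀ = U := by
  ext i j
  fin_cases i; fin_cases j; rfl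

private lemma fromBlocks_diag_pow {m l : Type*} [DecidableEq m] [DecidableEq l]
    [Fintype m] [Fintype l] (A : Matrix m m ℂ) (D : Matrix l l ℂ) (k : ℕ) :
    (Matrix.fromBlocks A 0 0 D) ^ k = Matrix.fromBlocks (A ^ k) 0 0 (D ^ k) := by
  induction k with
  | zero => simp [Matrix.fromBlocks_one]
  | succ k ih => rw [pow_succ, pow_succ, pow_succ, ih, Matrix.fromBlocks_multiply]; simp


/-- Pointwise linear-algebra claim in the proof of Theorem 4.1 of the paper, for
`SO₀(p,2)`-Higgs bundles: if the Higgs field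
`θ(X) = [[0, β(X), γ(X)], [ᵗγ(X), 0, 0], [ᵗβ(X), 0, 0]]` (blocks of sizes `p, 1, 1`)
satisfies `θ(X)θ(Y) = θ(Y)θ(X)` for all `X, Y` and is nilpotent of order `n`
(`θ(X₁)⋯θ(Xₙ) = 0` for all `X₁, …, Xₙ`), then `ᵗγβ = 0` and moreover either
`ᵗββ = 0` identically or `ᵗγγ = 0` identically. -/
theorem so_p2_higgs_field_structure (p n : ℕ) (hp : 1 ≤ p) (hn : 1 ≤ n)
    (T : Type*) [AddCommGroup T] [Module ℂ T] [FiniteDimensional ℂ T]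
    (β γ : T →ₗ[ℂ] Matrix (Fin p) (Fin 1) ℂ)
    (θ : T → Matrix ((Fin p) ⊕ ((Fin 1) ⊕ (Fin 1))) ((Fin p) ⊕ ((Fin 1) ⊕ (Fin 1))) ℂ)
    (hθ : ∀ X : T, θ X =
      Matrix.fromBlocks 0 (Matrix.fromCols (β X) (γ X))
        (Matrix.fromRows (γ X)ᵀ (β X)ᵀ) 0)
    (hcomm : ∀ X Y : T, θ X * θ Y = θ Y * θ X)
    (hnilp : ∀ Xs : Fin n → T, (List.ofFn (fun i => θ (Xs i))).prod = 0) :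
    (∀ X Y : T, (γ X)ᵀ * β Y = 0) ∧
      ((∀ X Y : T, (β X)ᵀ * β Y = 0) ∨ (∀ X Y : T, (γ X)ᵀ * γ Y = 0)) := by
  set A : T → Matrix (Fin p) ((Fin 1) ⊕ (Fin 1)) ℂ :=
    fun X => Matrix.fromCols (β X) (γ X) with hA
  set B : T → Matrix ((Fin 1) ⊕ (Fin 1)) (Fin p) ℂ :=
    fun X => Matrix.fromRows (γ X)ᵀ (β X)ᵀ with hB
  have hθ' : ∀ X, θ X = Matrix.fromBlocks 0 (A X) (B X) 0 := hθ
  have hprod2 : ∀ X Y, θ X * θ Y =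
      Matrix.fromBlocks (A X * B Y) 0 0 (B X * A Y) := by
    intro X Y
    rw [hθ' X, hθ' Y, Matrix.fromBlocks_multiply]
    simp
  have hM : ∀ X Y, B X * A Y =
      Matrix.fromBlocks ((γ X)ᵀ * β Y) ((γ X)ᵀ * γ Y) ((β X)ᵀ * β Y) ((β X)ᵀ * γ Y) := by
    intro X Y
    rw [hA, hB]
    exact Matrix.fromRows_mul_fromCols _ _ _ _
  have hpown : ∀ X, θ X ^ n = 0 := by
    intro X
    have h := hnilp (fun _ => X)
    simpa [List.ofFn_const, List.prod_replicate] using h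
  -- the key nilpotency statement
  have hMnil : ∀ X Y Z W, ((B X * A Y) * (B Z * A W)) ^ n = 0 := by
    intro X Y Z W
    have hQ : (θ X * θ Y) * (θ Z * θ W) =
        Matrix.fromBlocks ((A X * B Y) * (A Z * B W)) 0 0 ((B X * A Y) * (B Z * A W)) := by
      rw [hprod2, hprod2, Matrix.fromBlocks_multiply]
      simp
    have hc : ∀ U V : T, Commute (θ U) (θ V) := fun U V => hcomm U V
    have c1 : Commute (θ X) (θ Y * (θ Z * θ W)) :=
      (hc X Y).mul_right ((hc X Z).mul_right (hc X W))
    have hQn : ((θ X * θ Y) * (θ Z * θ W)) ^ n = 0 := by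
      have : (θ X * θ Y) * (θ Z * θ W) = θ X * (θ Y * (θ Z * θ W)) := by
        rw [mul_assoc]
      rw [this, c1.mul_pow, hpown]
      simp
    rw [hQ, fromBlocks_diag_pow] at hQn
    ext i j
    simpa using congrFun (congrFun hQn (Sum.inr i)) (Sum.inr j)
  -- γᵀβ vanishes on the diagonal
  have hsdiag : ∀ X, ((γ X)ᵀ * β X) 0 0 = 0 := by
    intro X
    have hnil : IsNilpotent (B X * A X) := by
      refine ⟨2 * n, ?_⟩
      calc (B X * A X) ^ (2 * n) = ((B X * A X) ^ 2) ^ n := by rw [← pow_mul, mul_comm]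
        _ = ((B X * A X) * (B X * A X)) ^ n := by rw [sq]
        _ = 0 := hMnil X X X X
    have htr := Matrix.isNilpotent_trace_of_isNilpotent hnil
    have htr0 : Matrix.trace (B X * A X) = 0 := htr.eq_zero
    have htreq : Matrix.trace (B X * A X) =
        ((γ X)ᵀ * β X) 0 0 + ((β X)ᵀ * γ X) 0 0 := by
      rw [hM]
      simp [Matrix.trace, Matrix.diag, Fintype.sum_sum_type]
    have hswap : ((β X)ᵀ * γ X) 0 0 = ((γ X)ᵀ * β X) 0 0 := by
      simp [Matrix.mul_apply, Matrix.transpose_apply, mul_comm]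
    rw [htreq, hswap] at htr0
    have : (2 : ℂ) * ((γ X)ᵀ * β X) 0 0 = 0 := by ring_nf; linear_combination htr0
    have h2 : (2 : ℂ) ≠ 0 := by norm_num
    exact (mul_eq_zero.mp this).resolve_left h2
  -- symmetry of γᵀβ
  have hMsymm : ∀ X Y, ((γ X)ᵀ * β Y) 0 0 = ((γ Y)ᵀ * β X) 0 0 := by
    intro X Y
    have h := hcomm X Y
    rw [hprod2, hprod2] at h
    have h2 := congrFun (congrFun h (Sum.inr (Sum.inl 0))) (Sum.inr (Sum.inl 0))
    simpa [hM, Matrix.fromBlocks_apply₂₂, Matrix.fromBlocks_apply₁₁] using h2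
  have hs : ∀ X Y, ((γ X)ᵀ * β Y) 0 0 = 0 := by
    intro X Y
    have h := hsdiag (X + Y)
    rw [map_add, map_add, Matrix.transpose_add, Matrix.add_mul, Matrix.mul_add,
      Matrix.mul_add] at h
    simp only [Matrix.add_apply] at h
    rw [hsdiag X, hsdiag Y, hMsymm Y X] at h
    have : (2 : ℂ) * ((γ X)ᵀ * β Y) 0 0 = 0 := by linear_combination h
    have h2 : (2 : ℂ) ≠ 0 := by norm_num
    exact (mul_eq_zero.mp this).resolve_left h2
  have hgb : ∀ X Y : T, (γ X)ᵀ * β Y = 0 := fun X Y => obo_eq_zero (hs X Y)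
  have hbg : ∀ X Y : T, (β X)ᵀ * γ Y = 0 := by
    intro X Y
    have : (β X)ᵀ * γ Y = ((γ Y)ᵀ * β X)ᵀ := by
      rw [Matrix.transpose_mul, Matrix.transpose_transpose]
    rw [this, hgb]
    exact Matrix.transpose_zero
  refine ⟨hgb, ?_⟩
  -- key scalar identity : (γXᵀγY)(βZᵀβW) = 0
  have hkey : ∀ X Y Z W, ((γ X)ᵀ * γ Y) 0 0 * ((β Z)ᵀ * β W) 0 0 = 0 := by
    intro X Y Z W
    have hM1 : B X * A Y = Matrix.fromBlocks 0 ((γ X)ᵀ * γ Y) ((β X)ᵀ * β Y) 0 := by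
      rw [hM, hgb, hbg]
    have hM2 : B Z * A W = Matrix.fromBlocks 0 ((γ Z)ᵀ * γ W) ((β Z)ᵀ * β W) 0 := by
      rw [hM, hgb, hbg]
    have hprodM : (B X * A Y) * (B Z * A W) =
        Matrix.fromBlocks (((γ X)ᵀ * γ Y) * ((β Z)ᵀ * β W)) 0 0
          (((β X)ᵀ * β Y) * ((γ Z)ᵀ * γ W)) := by
      rw [hM1, hM2, Matrix.fromBlocks_multiply]
      simp
    have h := hMnil X Y Z W
    rw [hprodM, fromBlocks_diag_pow] at h
    have h11 := congrFun (congrFun h (Sum.inl 0)) (Sum.inl 0)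
    simp only [Matrix.fromBlocks_apply₁₁, Matrix.zero_apply] at h11
    rw [obo_pow] at h11
    have := pow_eq_zero_iff (n := n) (by omega) |>.mp h11
    rwa [Matrix.mul_apply, Fin.sum_univ_one] at this
  by_cases hb : ∀ X Y : T, (β X)ᵀ * β Y = 0
  · exact Or.inl hb
  · right
    push_neg at hb
    obtain ⟨Z, W, hZW⟩ := hb
    have hZW0 : ((β Z)ᵀ * β W) 0 0 ≠ 0 := fun h => hZW (obo_eq_zero h)
    intro X Y
    apply obo_eq_zero
    exact (mul_eq_zero.mp (hkey X Y Z W)).resolve_right hZW0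
end
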